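/- Let V be a type, d : V → V → ℝ and w : V → ℝ arbitrary functions, and let s, u ∈ V. Define w' : V → ℝ by w'(v) = w(u) if v = s and w'(v) = w(v) otherwise, and define c' : V → V → ℝ by c' x y = d x y + (w' x + w' y)/2. Then for every duplicate-free list of vertices l = [u₁, u₂, …, uₙ] with n ≥ 2, u₁ = s and uₙ = u, the walk cost of l under c' equals the walk cost of l under d plus the sum ∑_{i=2}^{n} w(uᵢ). -/

import Mathlib

/-- The cost of a walk `[v₀, v₁, …, vₙ]` under an edge-cost function `c`,
namely `∑_{i=0}^{n-1} c vᵢ vᵢ₊₁`. -/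
def walkCost {V : Type*} (c : V → V → ℝ) : List V → ℝ
  | a :: b :: l => c a b + walkCost c (b :: l)
  | _ => 0

lemma walkCost_add {V : Type*} (c e : V → V → ℝ) :
    ∀ l : List V, walkCost (fun x y => c x y + e x y) l = walkCost c l + walkCost e l
  | [] => by simp [walkCost]
  | [a] => by simp [walkCost]
  | a :: b :: t => by
      simp only [walkCost, walkCost_add c e (b :: t)]; ring

lemma walkCost_half {V : Type*} (f : V → ℝ) :
    ∀ (a : V) (l : List V), walkCost (fun x y => (f x + f y) / 2) (a :: l)
      = f a / 2 + (l.map f).sum - f ((a :: l).getLast (List.cons_ne_nil a l)) / 2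
  | a, [] => by simp [walkCost]
  | a, b :: t => by
      have ih := walkCost_half f b t
      simp only [walkCost] at ih ⊢
      rw [ih, List.getLast_cons (List.cons_ne_nil b t)]
      simp only [List.map_cons, List.sum_cons]
      ring

theorem walkCost_nodup_walk_source_weight_replaced {V : Type*} [DecidableEq V]
    (d : V → V → ℝ) (w : V → ℝ) (s u : V)
    (w' : V → ℝ) (hw' : ∀ v, w' v = if v = s then w u else w v)
    (c' : V → V → ℝ) (hc' : ∀ x y, c' x y = d x y + (w' x + w' y) / 2)
    (l : List V) (hnd : l.Nodup) (hl : 2 ≤ l.length)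
    (hhead : l.head? = some s) (hlast : l.getLast? = some u) :
    walkCost c' l = walkCost d l + ((l.drop 1).map w).sum := by
  match l with
  | [] => simp at hl
  | [a] => simp at hl
  | a :: b :: t =>
    have ha : a = s := by simpa using hhead
    have hcfun : c' = fun x y => d x y + (w' x + w' y) / 2 :=
      funext fun x => funext fun y => hc' x y
    rw [hcfun, walkCost_add, walkCost_half]
    have hlast' : (a :: b :: t).getLast (List.cons_ne_nil _ _) = u := by
      rw [List.getLast?_eq_getLast (List.cons_ne_nil _ _)] at hlast
      exact Option.some.inj hlast
    rw [hlast']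
    have hwu : w' u = w u := by rw [hw']; split_ifs with h <;> rfl
    have hws : w' a = w u := by rw [hw', if_pos ha]
    have hmap : (b :: t).map w' = (b :: t).map w := by
      apply List.map_congr_left
      intro x hx
      rw [hw', if_neg]
      intro hxs
      subst hxs; subst ha
      exact (List.nodup_cons.mp hnd).1 hx
    rw [hwu, hws, hmap]
    simp [List.drop]
    try ring
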